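/- If u : 𝔻 → 𝔻 is a harmonic mapping (of the plane disc into itself) with u(0) = 0, then |∂u(0)| + |∂̄u(0)| ≤ 4/π, where ∂u = (1/2)(uₓ − i u_y) and ∂̄u = (1/2)(uₓ + i u_y) are the Wirtinger derivatives of u viewed as a complex-valued function. -/

import Mathlib

open Metric Set

/-- `u` is harmonic on the unit disc: it is `C²` there and its Laplacian vanishes at
every point of the disc (for `ℂ`-valued `u` this means both `Re u` and `Im u` are harmonic). -/
def HarmonicOnDisc {E : Type*} [NormedAddCommGroup E] [NormedSpace ℝ E] (u : ℂ → E) : Prop :=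
  ContDiffOn ℝ 2 u (ball 0 1) ∧
  ∀ z ∈ ball (0 : ℂ) 1,
    fderiv ℝ (fun w => fderiv ℝ u w 1) z 1
      + fderiv ℝ (fun w => fderiv ℝ u w Complex.I) z Complex.I = 0

open Complex intervalIntegral Real MeasureTheory

noncomputable def wd (u : ℂ → ℂ) (z : ℂ) : ℂ :=
  (1 / 2) * (fderiv ℝ u z 1 - Complex.I * fderiv ℝ u z Complex.I)

noncomputable def wdb (u : ℂ → ℂ) (z : ℂ) : ℂ :=
  (1 / 2) * (fderiv ℝ u z 1 + Complex.I * fderiv ℝ u z Complex.I)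


lemma fderiv_decomp (u : ℂ → ℂ) (z v : ℂ) :
    fderiv ℝ u z v = wd u z * v + wdb u z * (starRingEnd ℂ) v := by
  set D := fderiv ℝ u z with hD
  have h1 : ∀ a b : ℝ, D ((a:ℂ) + (b:ℂ) * Complex.I) = (a:ℂ) * D 1 + (b:ℂ) * D Complex.I := by
    intro a b
    rw [show ((a:ℂ) + (b:ℂ) * Complex.I) = a • (1:ℂ) + b • Complex.I by
      simp [Complex.real_smul]]
    rw [_root_.map_add, _root_.map_smul, _root_.map_smul]
    simp [Complex.real_smul]
  rw [← Complex.re_add_im v, h1]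
  simp only [_root_.map_add, map_mul, Complex.conj_ofReal, Complex.conj_I, wd, wdb, ← hD]
  linear_combination ((v.im : ℂ) * D Complex.I) * Complex.I_sq
lemma fderiv_conj (u : ℂ → ℂ) (z : ℂ) :
    fderiv ℝ (fun w => (starRingEnd ℂ) (u w)) z
      = (Complex.conjCLE : ℂ →L[ℝ] ℂ).comp (fderiv ℝ u z) :=
  Complex.conjCLE.comp_fderiv

lemma harmonic_conj {u : ℂ → ℂ} (hu : HarmonicOnDisc u) :
    HarmonicOnDisc (fun w => (starRingEnd ℂ) (u w)) := by
  have hcd : ContDiffOn ℝ 2 (fun w => (starRingEnd ℂ) (u w)) (ball 0 1) :=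
    Complex.conjCLE.toContinuousLinearMap.contDiff.comp_contDiffOn hu.1
  refine ⟨hcd, fun z hz => ?_⟩
  have hdiff : ∀ w ∈ ball (0:ℂ) 1, DifferentiableAt ℝ u w := fun w hw =>
    (hu.1.differentiableOn (by norm_num)).differentiableAt (isOpen_ball.mem_nhds hw)
  have hev : ∀ c : ℂ, (fun w => fderiv ℝ (fun w => (starRingEnd ℂ) (u w)) w c)
      =ᶠ[nhds z] (fun w => (starRingEnd ℂ) (fderiv ℝ u w c)) := by
    intro c
    filter_upwards [isOpen_ball.mem_nhds hz] with w hw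
    rw [fderiv_conj u w]
    rfl
  have key : ∀ c : ℂ, fderiv ℝ (fun w => fderiv ℝ (fun w => (starRingEnd ℂ) (u w)) w c) z c
      = (starRingEnd ℂ) (fderiv ℝ (fun w => fderiv ℝ u w c) z c) := by
    intro c
    rw [Filter.EventuallyEq.fderiv_eq (hev c)]
    have hd2 : DifferentiableAt ℝ (fun w => fderiv ℝ u w c) z := by
      have h1 : ContDiffOn ℝ 1 (fderiv ℝ u) (ball 0 1) :=
        hu.1.fderiv_of_isOpen isOpen_ball le_rfl
      have := (h1.differentiableOn one_ne_zero).differentiableAt (isOpen_ball.mem_nhds hz)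
      exact ((ContinuousLinearMap.apply ℝ ℂ c).hasFDerivAt.comp z this.hasFDerivAt).differentiableAt
    rw [show (fun w => (starRingEnd ℂ) (fderiv ℝ u w c))
        = (Complex.conjCLE : ℂ ≃L[ℝ] ℂ) ∘ (fun w => fderiv ℝ u w c) from rfl,
      Complex.conjCLE.comp_fderiv]
    rfl
  rw [key 1, key Complex.I, ← _root_.map_add, hu.2 z hz, map_zero]

lemma fderiv_contDiffOn {u : ℂ → ℂ} (hu : HarmonicOnDisc u) :
    ContDiffOn ℝ 1 (fderiv ℝ u) (ball 0 1) :=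
  hu.1.fderiv_of_isOpen isOpen_ball le_rfl

lemma wd_holo {u : ℂ → ℂ} (hu : HarmonicOnDisc u) :
    DifferentiableOn ℂ (wd u) (ball 0 1) := by
  intro z hz
  -- second derivative
  have hf1 : ContDiffOn ℝ 1 (fderiv ℝ u) (ball 0 1) := fderiv_contDiffOn hu
  have hdf : DifferentiableAt ℝ (fderiv ℝ u) z :=
    (hf1.differentiableOn one_ne_zero).differentiableAt (isOpen_ball.mem_nhds hz)
  set B := fderiv ℝ (fderiv ℝ u) z with hB
  have hBsymm : ∀ v w, B v w = B w v := by
    apply second_derivative_symmetric_of_eventually (f := u) (f' := fderiv ℝ u)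
    · filter_upwards [isOpen_ball.mem_nhds hz] with w hw
      exact ((hu.1.differentiableOn (by norm_num)).differentiableAt
        (isOpen_ball.mem_nhds hw)).hasFDerivAt
    · exact hdf.hasFDerivAt
  -- harmonicity in terms of B
  have happ : ∀ c : ℂ, HasFDerivAt (fun w => fderiv ℝ u w c)
      ((ContinuousLinearMap.apply ℝ ℂ c).comp B) z :=
    fun c => (ContinuousLinearMap.apply ℝ ℂ c).hasFDerivAt.comp z hdf.hasFDerivAt
  have hlap : B 1 1 + B Complex.I Complex.I = 0 := by
    have h1 := (happ 1).fderiv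
    have h2 := (happ Complex.I).fderiv
    have := hu.2 z hz
    rw [h1, h2] at this
    simpa using this
  -- real derivative of wd u at z
  have hreal : HasFDerivAt (wd u)
      ((1 / 2 : ℂ) • (((ContinuousLinearMap.apply ℝ ℂ 1).comp B) -
        Complex.I • ((ContinuousLinearMap.apply ℝ ℂ Complex.I).comp B))) z := by
    have := ((happ 1).sub ((happ Complex.I).const_mul Complex.I)).const_mul (1 / 2 : ℂ)
    convert this using 2 <;> rfl
  -- transfer to complex differentiability
  have hDval : ∀ v : ℂ, ((1 / 2 : ℂ) • (((ContinuousLinearMap.apply ℝ ℂ 1).comp B) -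
        Complex.I • ((ContinuousLinearMap.apply ℝ ℂ Complex.I).comp B))) v
      = ((1 / 2) * (B 1 1 - Complex.I * B 1 Complex.I)) * v := by
    intro v
    have hv : B v = v.re • B 1 + v.im • B Complex.I := by
      conv_lhs => rw [← Complex.re_add_im v]
      rw [show (v.re : ℂ) + v.im * Complex.I = v.re • (1:ℂ) + v.im • Complex.I by
        simp [Complex.real_smul]]
      rw [_root_.map_add, _root_.map_smul, _root_.map_smul]
    have hII : B Complex.I Complex.I = - B 1 1 := by linear_combination hlap
    have hI1 : B Complex.I 1 = B 1 Complex.I := hBsymm _ _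
    simp only [ContinuousLinearMap.smul_apply, ContinuousLinearMap.sub_apply,
      ContinuousLinearMap.comp_apply, ContinuousLinearMap.apply_apply, hv,
      ContinuousLinearMap.add_apply, _root_.map_add, _root_.map_smul, smul_eq_mul, Complex.real_smul,
      hII, hI1]
    conv_rhs => rw [← Complex.re_add_im v]
    ring_nf
    simp only [Complex.I_sq]
    ring
  have hLrs : (ContinuousLinearMap.smulRight (1 : ℂ →L[ℂ] ℂ)
      ((1 / 2) * (B 1 1 - Complex.I * B 1 Complex.I))).restrictScalars ℝ
      = ((1 / 2 : ℂ) • (((ContinuousLinearMap.apply ℝ ℂ 1).comp B) -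
        Complex.I • ((ContinuousLinearMap.apply ℝ ℂ Complex.I).comp B))) := by
    ext v
    rw [hDval v, ContinuousLinearMap.coe_restrictScalars', ContinuousLinearMap.smulRight_apply,
      ContinuousLinearMap.one_apply, smul_eq_mul, mul_comm]
  exact (hasFDerivAt_of_restrictScalars (𝕜 := ℝ) hreal hLrs).differentiableAt.differentiableWithinAt

lemma circle_avg {F : ℂ → ℂ} (hF : DifferentiableOn ℂ F (ball 0 1)) {s : ℝ}
    (h0 : 0 < s) (h1 : s < 1) :
    ∫ θ in (0:ℝ)..2*π, F (circleMap 0 s θ) = 2 * π * F 0 := by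
  have hsub : closedBall (0:ℂ) s ⊆ ball 0 1 := closedBall_subset_ball h1
  have hd : DiffContOnCl ℂ F (ball 0 s) := by
    refine ⟨hF.mono (ball_subset_ball h1.le), ?_⟩
    rw [closure_ball (0:ℂ) h0.ne']
    exact hF.continuousOn.mono hsub
  have := hd.circleIntegral_sub_inv_smul (w := 0) (by simpa using h0)
  rw [circleIntegral] at this
  simp only [deriv_circleMap, sub_zero, smul_eq_mul] at this
  have heq : ∀ θ : ℝ, circleMap 0 s θ * I * ((circleMap 0 s θ)⁻¹ * F (circleMap 0 s θ))
      = I * F (circleMap 0 s θ) := by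
    intro θ
    have hne : circleMap 0 s θ ≠ 0 := circleMap_ne_center h0.ne'
    field_simp
  rw [intervalIntegral.integral_congr (fun θ _ => heq θ), intervalIntegral.integral_const_mul]
    at this
  apply mul_left_cancel₀ I_ne_zero
  rw [this]; ring

lemma circle_coeff {F : ℂ → ℂ} (hF : DifferentiableOn ℂ F (ball 0 1)) {s : ℝ}
    (h0 : 0 < s) (h1 : s < 1) :
    ∫ θ in (0:ℝ)..2*π, F (circleMap 0 s θ) * Complex.exp (2 * θ * I) = 0 := by
  have hsub : closedBall (0:ℂ) s ⊆ ball 0 1 := closedBall_subset_ball h1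
  have hzero : (∮ z in C(0, s), F z * z) = 0 := by
    apply circleIntegral_eq_zero_of_differentiable_on_off_countable h0.le countable_empty
    · exact ((hF.continuousOn.mono hsub).mul (continuousOn_id))
    · intro z hz
      exact ((hF.differentiableAt (isOpen_ball.mem_nhds
        (ball_subset_ball h1.le hz.1))).mul differentiableAt_id)
  rw [circleIntegral] at hzero
  simp only [deriv_circleMap, smul_eq_mul] at hzero
  have heq : ∀ θ : ℝ, circleMap 0 s θ * I * (F (circleMap 0 s θ) * circleMap 0 s θ)
      = (I * s ^ 2) * (F (circleMap 0 s θ) * Complex.exp (2 * θ * I)) := by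
    intro θ
    simp only [circleMap, zero_add]
    rw [show (2 : ℂ) * θ * I = θ * I + θ * I by ring, Complex.exp_add]
    push_cast
    ring
  rw [intervalIntegral.integral_congr (fun θ _ => heq θ),
    intervalIntegral.integral_const_mul] at hzero
  rcases mul_eq_zero.1 hzero with h | h
  · exfalso
    apply mul_ne_zero I_ne_zero _ h
    exact_mod_cast pow_ne_zero 2 (by exact_mod_cast h0.ne' : (s:ℂ) ≠ 0)
  · exact h

lemma wd_conj (u : ℂ → ℂ) (z : ℂ) :
    wd (fun w => (starRingEnd ℂ) (u w)) z = (starRingEnd ℂ) (wdb u z) := by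
  simp only [wd, wdb, fderiv_conj u z, ContinuousLinearMap.comp_apply, _root_.map_add, map_mul,
    Complex.conj_I, map_one]
  rw [show (Complex.conjCLE : ℂ →L[ℝ] ℂ) (fderiv ℝ u z 1) = (starRingEnd ℂ) (fderiv ℝ u z 1)
    from rfl, show (Complex.conjCLE : ℂ →L[ℝ] ℂ) (fderiv ℝ u z Complex.I)
    = (starRingEnd ℂ) (fderiv ℝ u z Complex.I) from rfl]
  have : (starRingEnd ℂ) ((1:ℂ)/2) = 1/2 := by
    rw [map_div₀, map_one, Complex.conj_ofNat]
  rw [this]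
  ring

lemma exp_int_integral (n : ℤ) (hn : n ≠ 0) :
    ∫ θ in (0:ℝ)..2*π, Complex.exp ((n * Complex.I) * θ) = 0 := by
  have hc : (n : ℂ) * Complex.I ≠ 0 := by
    simp [Complex.I_ne_zero, hn]
  rw [integral_exp_mul_complex hc]
  rw [show ((n:ℂ) * Complex.I) * (2*π : ℝ) = n * (2 * π * Complex.I) by push_cast; ring]
  rw [Complex.exp_int_mul_two_pi_mul_I n]
  simp

lemma wd_contOn {u : ℂ → ℂ} (hu : HarmonicOnDisc u) :
    ContinuousOn (wd u) (ball 0 1) := by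
  have h1 := (fderiv_contDiffOn hu).continuousOn
  have happ : ∀ c : ℂ, ContinuousOn (fun z => fderiv ℝ u z c) (ball 0 1) := fun c =>
    (ContinuousLinearMap.apply ℝ ℂ c).continuous.comp_continuousOn h1
  exact continuousOn_const.mul ((happ 1).sub (continuousOn_const.mul (happ Complex.I)))

lemma wdb_contOn {u : ℂ → ℂ} (hu : HarmonicOnDisc u) :
    ContinuousOn (wdb u) (ball 0 1) := by
  have h1 := (fderiv_contDiffOn hu).continuousOn
  have happ : ∀ c : ℂ, ContinuousOn (fun z => fderiv ℝ u z c) (ball 0 1) := fun c =>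
    (ContinuousLinearMap.apply ℝ ℂ c).continuous.comp_continuousOn h1
  exact continuousOn_const.mul ((happ 1).add (continuousOn_const.mul (happ Complex.I)))

lemma smul_exp_mem_ball {s : ℝ} (hs : |s| < 1) (θ : ℝ) :
    (s:ℂ) * Complex.exp (θ * Complex.I) ∈ ball (0:ℂ) 1 := by
  rw [mem_ball_zero_iff]
  rw [norm_mul, Complex.norm_exp_ofReal_mul_I,
    Complex.norm_real, Real.norm_eq_abs, mul_one]
  exact hs

lemma radial_ftc {u : ℂ → ℂ} (hu : HarmonicOnDisc u) {r : ℝ} (h0 : 0 ≤ r) (h1 : r < 1)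
    (θ : ℝ) :
    u (circleMap 0 r θ) = u 0 + ∫ s in (0:ℝ)..r,
      (wd u (circleMap 0 s θ) * Complex.exp (θ * Complex.I)
        + wdb u (circleMap 0 s θ) * Complex.exp (-(θ * Complex.I))) := by
  set e := Complex.exp (θ * Complex.I) with he
  have hcm : ∀ s : ℝ, circleMap 0 s θ = (s:ℂ) * e := by
    intro s; simp [circleMap, he]
  have hconj : (starRingEnd ℂ) e = Complex.exp (-(θ * Complex.I)) := by
    rw [he, ← Complex.exp_conj]
    congr 1
    simp [Complex.conj_I]
  have hmem : ∀ s ∈ uIcc (0:ℝ) r, (s:ℂ) * e ∈ ball (0:ℂ) 1 := by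
    intro s hs
    rw [uIcc_of_le h0] at hs
    exact smul_exp_mem_ball (lt_of_le_of_lt (abs_le.2 ⟨by linarith [hs.1], hs.2⟩) h1) θ
  have key : ∀ s ∈ uIcc (0:ℝ) r, HasDerivAt (fun t : ℝ => u ((t:ℂ) * e))
      (wd u (circleMap 0 s θ) * e + wdb u (circleMap 0 s θ) * Complex.exp (-(θ * Complex.I)))
      s := by
    intro s hs
    have hd : HasDerivAt (fun t : ℝ => ((t:ℂ) * e)) e s := by
      simpa using (Complex.ofRealCLM.hasDerivAt (x := s)).mul_const e
    have hu' : HasFDerivAt u (fderiv ℝ u ((s:ℂ) * e)) ((s:ℂ) * e) :=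
      ((hu.1.differentiableOn (by norm_num)).differentiableAt
        (isOpen_ball.mem_nhds (hmem s hs))).hasFDerivAt
    have := hu'.comp_hasDerivAt s hd
    rw [hcm s]
    simpa [fderiv_decomp, hconj, Function.comp_def] using this
  have hcont : ContinuousOn (fun s : ℝ => wd u (circleMap 0 s θ) * e
      + wdb u (circleMap 0 s θ) * Complex.exp (-(θ * Complex.I))) (uIcc (0:ℝ) r) := by
    have hmap : MapsTo (fun s : ℝ => circleMap 0 s θ) (uIcc (0:ℝ) r) (ball (0:ℂ) 1) := by
      intro s hs; simpa [hcm s] using hmem s hs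
    have hin : ContinuousOn (fun s : ℝ => circleMap 0 s θ) (uIcc (0:ℝ) r) := by
      have : Continuous (fun s : ℝ => (s:ℂ) * e) :=
        Complex.continuous_ofReal.mul continuous_const
      simpa [funext hcm] using this.continuousOn
    exact (((wd_contOn hu).comp hin hmap).mul continuousOn_const).add
      (((wdb_contOn hu).comp hin hmap).mul continuousOn_const)
  have := intervalIntegral.integral_eq_sub_of_hasDerivAt key hcont.intervalIntegrable
  rw [this, hcm r]
  simp

lemma circleMap_mem_ball {s : ℝ} (h0 : 0 ≤ s) (h1 : s < 1) (θ : ℝ) :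
    circleMap 0 s θ ∈ ball (0:ℂ) 1 := by
  have := smul_exp_mem_ball (by rwa [_root_.abs_of_nonneg h0]) θ
  simpa [circleMap] using this

lemma intervalIntegral_conj {f : ℝ → ℂ} {a b : ℝ} :
    ∫ x in a..b, (starRingEnd ℂ) (f x) = (starRingEnd ℂ) (∫ x in a..b, f x) := by
  rw [intervalIntegral, intervalIntegral, map_sub, integral_conj, integral_conj]

lemma inner_integral {u : ℂ → ℂ} (hu : HarmonicOnDisc u) {s : ℝ}
    (h0 : 0 ≤ s) (h1 : s < 1) :
    ∫ θ in (0:ℝ)..2*π, (wd u (circleMap 0 s θ)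
        + wdb u (circleMap 0 s θ) * Complex.exp (-(2 * θ * Complex.I)))
      = 2 * π * wd u 0 := by
  have hmem := fun θ => circleMap_mem_ball h0 h1 θ
  have hcexp : Continuous (fun θ : ℝ => Complex.exp (-(2 * θ * Complex.I))) := by
    apply Complex.continuous_exp.comp
    continuity
  have hcont1 : ContinuousOn (fun θ : ℝ => wd u (circleMap 0 s θ)) (uIcc (0:ℝ) (2*π)) :=
    (wd_contOn hu).comp (continuous_circleMap 0 s).continuousOn (fun θ _ => hmem θ)
  have hcont2 : ContinuousOn (fun θ : ℝ => wdb u (circleMap 0 s θ)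
      * Complex.exp (-(2 * θ * Complex.I))) (uIcc (0:ℝ) (2*π)) :=
    ((wdb_contOn hu).comp (continuous_circleMap 0 s).continuousOn
      (fun θ _ => hmem θ)).mul hcexp.continuousOn
  rw [intervalIntegral.integral_add hcont1.intervalIntegrable hcont2.intervalIntegrable]
  have hA : ∫ θ in (0:ℝ)..2*π, wd u (circleMap 0 s θ) = 2 * π * wd u 0 := by
    rcases eq_or_lt_of_le h0 with rfl | hs
    · simp only [circleMap, Complex.ofReal_zero, zero_mul, zero_add,
        intervalIntegral.integral_const, Complex.real_smul, sub_zero]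
      push_cast; ring
    · exact circle_avg (wd_holo hu) hs h1
  have hB : ∫ θ in (0:ℝ)..2*π, wdb u (circleMap 0 s θ)
      * Complex.exp (-(2 * θ * Complex.I)) = 0 := by
    have hpt : ∀ θ : ℝ, wdb u (circleMap 0 s θ) * Complex.exp (-(2 * θ * Complex.I))
        = (starRingEnd ℂ) ((wd (fun w => (starRingEnd ℂ) (u w))) (circleMap 0 s θ)
            * Complex.exp (2 * θ * Complex.I)) := by
      intro θ
      rw [map_mul, wd_conj, Complex.conj_conj, ← Complex.exp_conj,
        show (starRingEnd ℂ) (2 * (θ:ℂ) * Complex.I) = -(2 * (θ:ℂ) * Complex.I) by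
          simp [Complex.ext_iff]]
    rw [intervalIntegral.integral_congr (fun θ _ => hpt θ), intervalIntegral_conj]
    rcases eq_or_lt_of_le h0 with rfl | hs
    · rw [show (fun θ : ℝ => wd (fun w => (starRingEnd ℂ) (u w)) (circleMap 0 0 θ)
          * Complex.exp (2 * θ * Complex.I)) = fun θ : ℝ =>
            wd (fun w => (starRingEnd ℂ) (u w)) 0
          * Complex.exp (((2:ℤ) * Complex.I) * θ) from funext fun θ => by
            simp only [circleMap, Complex.ofReal_zero, zero_mul, zero_add]
            congr 1
            push_cast
            ring]
      rw [intervalIntegral.integral_const_mul, exp_int_integral 2 (by norm_num), mul_zero,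
        map_zero]
    · rw [circle_coeff (wd_holo (harmonic_conj hu)) hs h1, map_zero]
  rw [hA, hB, add_zero]

lemma fourier_coeff {u : ℂ → ℂ} (hu : HarmonicOnDisc u) {r : ℝ} (h0 : 0 < r) (h1 : r < 1) :
    ∫ θ in (0:ℝ)..2*π, u (circleMap 0 r θ) * Complex.exp (-(θ * Complex.I))
      = 2 * π * r * wd u 0 := by
  have h2π : (0:ℝ) ≤ 2*π := by positivity
  set P : ℝ → ℝ → ℂ := fun θ s => wd u (circleMap 0 s θ)
      + wdb u (circleMap 0 s θ) * Complex.exp (-(2 * θ * Complex.I)) with hP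
  -- pointwise identity
  have hpt : ∀ θ : ℝ, u (circleMap 0 r θ) * Complex.exp (-(θ * Complex.I))
      = u 0 * Complex.exp (-(θ * Complex.I)) + ∫ s in (0:ℝ)..r, P θ s := by
    intro θ
    rw [radial_ftc hu h0.le h1 θ, add_mul]
    congr 1
    rw [← intervalIntegral.integral_mul_const]
    apply intervalIntegral.integral_congr
    intro s _
    simp only [hP]
    rw [add_mul, mul_assoc, mul_assoc, ← Complex.exp_add, ← Complex.exp_add,
      show (θ:ℂ)*Complex.I + -((θ:ℂ)*Complex.I) = 0 by ring, Complex.exp_zero, mul_one,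
      show -((θ:ℂ)*Complex.I) + -((θ:ℂ)*Complex.I) = -(2*(θ:ℂ)*Complex.I) by ring]
  rw [intervalIntegral.integral_congr (fun θ _ => hpt θ)]
  -- split
  have hcontP : ContinuousOn (fun p : ℝ × ℝ => P p.1 p.2) ((Icc 0 (2*π)) ×ˢ (Icc 0 r)) := by
    have hcm : Continuous (fun p : ℝ × ℝ => circleMap 0 p.2 p.1) := by
      simp only [circleMap, zero_add]
      exact (Complex.continuous_ofReal.comp continuous_snd).mul
        (Complex.continuous_exp.comp ((Complex.continuous_ofReal.comp continuous_fst).mul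
          continuous_const))
    have hmapsTo : MapsTo (fun p : ℝ × ℝ => circleMap 0 p.2 p.1)
        ((Icc 0 (2*π)) ×ˢ (Icc 0 r)) (ball (0:ℂ) 1) := by
      intro p hp
      exact circleMap_mem_ball hp.2.1 (lt_of_le_of_lt hp.2.2 h1) p.1
    have hexpc : Continuous (fun p : ℝ × ℝ => Complex.exp (-(2 * p.1 * Complex.I))) := by
      apply Complex.continuous_exp.comp
      continuity
    exact (((wd_contOn hu).comp hcm.continuousOn hmapsTo).add
      (((wdb_contOn hu).comp hcm.continuousOn hmapsTo).mul hexpc.continuousOn))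
  have hintP : IntegrableOn (fun p : ℝ × ℝ => P p.1 p.2) ((Ioc 0 (2*π)) ×ˢ (Ioc 0 r)) := by
    apply (hcontP.integrableOn_compact (isCompact_Icc.prod isCompact_Icc)).mono_set
    exact prod_mono Ioc_subset_Icc_self Ioc_subset_Icc_self
  have hswap : ∫ θ in (0:ℝ)..2*π, ∫ s in (0:ℝ)..r, P θ s
      = ∫ s in (0:ℝ)..r, ∫ θ in (0:ℝ)..2*π, P θ s := by
    simp_rw [intervalIntegral.integral_of_le h0.le, intervalIntegral.integral_of_le h2π]
    exact MeasureTheory.integral_integral_swap (by rwa [Measure.prod_restrict])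
  have hucont : Continuous (fun θ : ℝ => u (circleMap 0 r θ) * Complex.exp (-(θ*Complex.I))) := by
    apply Continuous.mul
    · exact hu.1.continuousOn.comp_continuous (continuous_circleMap 0 r)
        (fun θ => circleMap_mem_ball h0.le h1 θ)
    · exact Complex.continuous_exp.comp (by continuity)
  have hconst : Continuous (fun θ : ℝ => u 0 * Complex.exp (-(θ*Complex.I))) := by
    apply continuous_const.mul
    exact Complex.continuous_exp.comp (by continuity)
  have hQ : (fun θ : ℝ => ∫ s in (0:ℝ)..r, P θ s)
      = fun θ => u (circleMap 0 r θ) * Complex.exp (-(θ*Complex.I))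
          - u 0 * Complex.exp (-(θ*Complex.I)) := funext fun θ => by rw [hpt θ]; ring
  rw [intervalIntegral.integral_add (hconst.intervalIntegrable _ _)
    (by rw [hQ]; exact (hucont.sub hconst).intervalIntegrable _ _)]
  have hfirst : ∫ θ in (0:ℝ)..2*π, u 0 * Complex.exp (-(θ*Complex.I)) = 0 := by
    rw [intervalIntegral.integral_const_mul]
    simp_rw [show ∀ θ:ℝ, -((θ:ℂ)*Complex.I) = (((-1:ℤ):ℂ)*Complex.I)*θ by
      intro θ; push_cast; ring]
    rw [exp_int_integral (-1) (by norm_num), mul_zero]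
  rw [hfirst, zero_add, hswap]
  have hinner : ∀ s ∈ uIcc (0:ℝ) r, ∫ θ in (0:ℝ)..2*π, P θ s = 2 * π * wd u 0 := by
    intro s hs
    rw [uIcc_of_le h0.le] at hs
    exact inner_integral hu hs.1 (lt_of_le_of_lt hs.2 h1)
  rw [intervalIntegral.integral_congr hinner, intervalIntegral.integral_const]
  rw [sub_zero, Complex.real_smul]
  push_cast
  ring

lemma integral_abs_cos : ∫ θ in (0:ℝ)..2*π, |Real.cos θ| = 4 := by
  have hsplit1 : ∫ θ in (0:ℝ)..2*π, |Real.cos θ|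
      = (∫ θ in (0:ℝ)..π/2, |Real.cos θ|) + (∫ θ in (π/2:ℝ)..3*π/2, |Real.cos θ|)
        + ∫ θ in (3*π/2:ℝ)..2*π, |Real.cos θ| := by
    have h1 : IntervalIntegrable (fun θ => |Real.cos θ|) volume 0 (π/2) :=
      (Real.continuous_cos.abs).intervalIntegrable _ _
    have h2 : IntervalIntegrable (fun θ => |Real.cos θ|) volume (π/2) (3*π/2) :=
      (Real.continuous_cos.abs).intervalIntegrable _ _
    have h3 : IntervalIntegrable (fun θ => |Real.cos θ|) volume (3*π/2) (2*π) :=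
      (Real.continuous_cos.abs).intervalIntegrable _ _
    rw [intervalIntegral.integral_add_adjacent_intervals h1 h2,
      intervalIntegral.integral_add_adjacent_intervals (h1.trans h2) h3]
  have pi_pos := Real.pi_pos
  have e1 : ∫ θ in (0:ℝ)..π/2, |Real.cos θ| = 1 := by
    rw [intervalIntegral.integral_congr (g := Real.cos) (fun θ hθ => by
      rw [uIcc_of_le (by linarith)] at hθ
      exact abs_of_nonneg (Real.cos_nonneg_of_mem_Icc ⟨by linarith [hθ.1], hθ.2⟩))]
    rw [integral_cos]
    simp
  have e2 : ∫ θ in (π/2:ℝ)..3*π/2, |Real.cos θ| = 2 := by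
    rw [intervalIntegral.integral_congr (g := fun θ => -Real.cos θ) (fun θ hθ => by
      rw [uIcc_of_le (by linarith)] at hθ
      exact abs_of_nonpos (Real.cos_nonpos_of_pi_div_two_le_of_le hθ.1 (by linarith [hθ.2])))]
    rw [intervalIntegral.integral_neg, integral_cos]
    rw [show (3*π/2 : ℝ) = π + π/2 by ring, Real.sin_add_pi_div_two, Real.sin_pi_div_two,
      Real.cos_pi]
    norm_num
  have e3 : ∫ θ in (3*π/2:ℝ)..2*π, |Real.cos θ| = 1 := by
    rw [intervalIntegral.integral_congr (g := Real.cos) (fun θ hθ => by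
      rw [uIcc_of_le (by linarith)] at hθ
      apply _root_.abs_of_nonneg
      have : Real.cos θ = Real.cos (θ - 2*π) := by
        rw [Real.cos_sub_two_pi]
      rw [this]
      exact Real.cos_nonneg_of_mem_Icc ⟨by linarith [hθ.1], by linarith [hθ.2]⟩)]
    rw [integral_cos]
    rw [Real.sin_two_pi, show (3*π/2 : ℝ) = π + π/2 by ring, Real.sin_add_pi_div_two,
      Real.cos_pi]
    norm_num
  rw [hsplit1, e1, e2, e3]
  norm_num

lemma integral_abs_cos_shift (c : ℝ) : ∫ θ in (0:ℝ)..2*π, |Real.cos (θ + c)| = 4 := by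
  rw [intervalIntegral.integral_comp_add_right (fun x => |Real.cos x|) c]
  have hper : Function.Periodic (fun x : ℝ => |Real.cos x|) (2*π) := fun x => by
    simp [Real.cos_add_two_pi]
  have := hper.intervalIntegral_add_eq c 0
  simp only [zero_add] at this
  rw [show (0 + c : ℝ) = c by ring, show (2*π + c : ℝ) = c + 2*π by ring, this]
  exact integral_abs_cos

lemma key_norm (a b θ : ℝ) :
    ‖(Complex.exp ((a:ℂ)*Complex.I) * Complex.exp (-((θ:ℂ)*Complex.I))
      + Complex.exp ((b:ℂ)*Complex.I) * Complex.exp ((θ:ℂ)*Complex.I))‖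
    = 2 * |Real.cos (θ + (b-a)/2)| := by
  set m : ℝ := (a+b)/2
  set d : ℝ := θ + (b-a)/2
  have h1 : Complex.exp ((a:ℂ)*Complex.I) * Complex.exp (-((θ:ℂ)*Complex.I))
      = Complex.exp ((m:ℂ)*Complex.I) * Complex.exp (-((d:ℂ)*Complex.I)) := by
    rw [← Complex.exp_add, ← Complex.exp_add]
    congr 1
    push_cast [m, d]
    ring
  have h2 : Complex.exp ((b:ℂ)*Complex.I) * Complex.exp ((θ:ℂ)*Complex.I)
      = Complex.exp ((m:ℂ)*Complex.I) * Complex.exp ((d:ℂ)*Complex.I) := by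
    rw [← Complex.exp_add, ← Complex.exp_add]
    congr 1
    push_cast [m, d]
    ring
  rw [h1, h2, ← mul_add]
  rw [norm_mul, Complex.norm_exp_ofReal_mul_I, one_mul]
  have hcos : Complex.exp (-((d:ℂ)*Complex.I)) + Complex.exp ((d:ℂ)*Complex.I)
      = 2 * (Real.cos d : ℂ) := by
    rw [show -((d:ℂ)*Complex.I) = ((-d : ℝ):ℂ) * Complex.I by push_cast; ring,
      Complex.exp_mul_I, Complex.exp_mul_I, ← Complex.ofReal_cos, ← Complex.ofReal_sin,
      ← Complex.ofReal_cos, ← Complex.ofReal_sin, Real.cos_neg, Real.sin_neg]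
    push_cast
    ring
  rw [hcos, norm_mul, Complex.norm_real, Real.norm_eq_abs]
  norm_num

lemma fourier_coeff' {u : ℂ → ℂ} (hu : HarmonicOnDisc u) {r : ℝ} (h0 : 0 < r) (h1 : r < 1) :
    ∫ θ in (0:ℝ)..2*π, u (circleMap 0 r θ) * Complex.exp ((θ:ℂ) * Complex.I)
      = 2 * π * r * wdb u 0 := by
  have h' := fourier_coeff (harmonic_conj hu) h0 h1
  have h2 := congrArg (starRingEnd ℂ) h'
  rw [← intervalIntegral_conj] at h2
  have hpt : ∀ θ : ℝ, (starRingEnd ℂ) ((starRingEnd ℂ) (u (circleMap 0 r θ))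
      * Complex.exp (-((θ:ℂ) * Complex.I)))
      = u (circleMap 0 r θ) * Complex.exp ((θ:ℂ) * Complex.I) := by
    intro θ
    rw [map_mul, Complex.conj_conj, ← Complex.exp_conj]
    congr 2
    simp [Complex.ext_iff]
  rw [intervalIntegral.integral_congr (fun θ _ => hpt θ)] at h2
  rw [h2, map_mul, wd_conj, Complex.conj_conj]
  congr 1
  simp [Complex.ext_iff]

lemma combined_bound {u : ℂ → ℂ} (hu : HarmonicOnDisc u)
    (hmaps : MapsTo u (ball 0 1) (ball 0 1)) {r : ℝ} (h0 : 0 < r) (h1 : r < 1)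
    {α β : ℂ} (hα : ‖α‖ = 1) (hβ : ‖β‖ = 1) :
    2 * π * r * ‖α * wd u 0 + β * wdb u 0‖ ≤ 8 := by
  have h2π : (0:ℝ) ≤ 2*π := by positivity
  have hucont : Continuous (fun θ : ℝ => u (circleMap 0 r θ)) :=
    hu.1.continuousOn.comp_continuous (continuous_circleMap 0 r)
      (fun θ => circleMap_mem_ball h0.le h1 θ)
  have hecont : Continuous (fun θ : ℝ => α * Complex.exp (-((θ:ℂ) * Complex.I))
      + β * Complex.exp ((θ:ℂ) * Complex.I)) := by
    apply Continuous.add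
    · exact continuous_const.mul (Complex.continuous_exp.comp (by continuity))
    · exact continuous_const.mul (Complex.continuous_exp.comp (by continuity))
  have hsum : (2 * (π:ℂ) * r) * (α * wd u 0 + β * wdb u 0)
      = ∫ θ in (0:ℝ)..2*π, u (circleMap 0 r θ)
          * (α * Complex.exp (-((θ:ℂ) * Complex.I)) + β * Complex.exp ((θ:ℂ) * Complex.I)) := by
    have hpt : ∀ θ : ℝ, u (circleMap 0 r θ)
        * (α * Complex.exp (-((θ:ℂ) * Complex.I)) + β * Complex.exp ((θ:ℂ) * Complex.I))
        = α * (u (circleMap 0 r θ) * Complex.exp (-((θ:ℂ) * Complex.I)))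
          + β * (u (circleMap 0 r θ) * Complex.exp ((θ:ℂ) * Complex.I)) := fun θ => by ring
    have i1 : IntervalIntegrable (fun θ : ℝ =>
        α * (u (circleMap 0 r θ) * Complex.exp (-((θ:ℂ) * Complex.I)))) volume 0 (2*π) :=
      (continuous_const.mul (hucont.mul
        (Complex.continuous_exp.comp (by continuity)))).intervalIntegrable _ _
    have i2 : IntervalIntegrable (fun θ : ℝ =>
        β * (u (circleMap 0 r θ) * Complex.exp ((θ:ℂ) * Complex.I))) volume 0 (2*π) :=
      (continuous_const.mul (hucont.mul
        (Complex.continuous_exp.comp (by continuity)))).intervalIntegrable _ _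
    rw [intervalIntegral.integral_congr (fun θ _ => hpt θ),
      intervalIntegral.integral_add i1 i2,
      intervalIntegral.integral_const_mul, intervalIntegral.integral_const_mul,
      fourier_coeff hu h0 h1, fourier_coeff' hu h0 h1]
    ring
  -- the norm bound
  have hαexp : α = Complex.exp ((α.arg : ℂ) * Complex.I) := by
    conv_lhs => rw [← Complex.norm_mul_exp_arg_mul_I α]
    rw [hα]
    simp
  have hβexp : β = Complex.exp ((β.arg : ℂ) * Complex.I) := by
    conv_lhs => rw [← Complex.norm_mul_exp_arg_mul_I β]
    rw [hβ]
    simp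
  have hptbd : ∀ θ ∈ Icc (0:ℝ) (2*π), ‖u (circleMap 0 r θ)
      * (α * Complex.exp (-((θ:ℂ) * Complex.I)) + β * Complex.exp ((θ:ℂ) * Complex.I))‖
      ≤ 2 * |Real.cos (θ + (β.arg - α.arg)/2)| := by
    intro θ _
    rw [norm_mul]
    have hu1 : ‖u (circleMap 0 r θ)‖ ≤ 1 :=
      le_of_lt (mem_ball_zero_iff.1 (hmaps (circleMap_mem_ball h0.le h1 θ)))
    have heq : ‖α * Complex.exp (-((θ:ℂ) * Complex.I)) + β * Complex.exp ((θ:ℂ) * Complex.I)‖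
        = 2 * |Real.cos (θ + (β.arg - α.arg)/2)| := by
      conv_lhs => rw [hαexp, hβexp]
      exact key_norm α.arg β.arg θ
    rw [heq]
    calc ‖u (circleMap 0 r θ)‖ * (2 * |Real.cos (θ + (β.arg - α.arg)/2)|)
        ≤ 1 * (2 * |Real.cos (θ + (β.arg - α.arg)/2)|) := by
          apply mul_le_mul_of_nonneg_right hu1 (by positivity)
      _ = _ := one_mul _
  have habs : ‖(2 * (π:ℂ) * r) * (α * wd u 0 + β * wdb u 0)‖ ≤ 8 := by
    rw [hsum]
    calc ‖(∫ θ in (0:ℝ)..2*π, u (circleMap 0 r θ)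
          * (α * Complex.exp (-((θ:ℂ) * Complex.I)) + β * Complex.exp ((θ:ℂ) * Complex.I)))‖
        ≤ ∫ θ in (0:ℝ)..2*π, ‖u (circleMap 0 r θ)
          * (α * Complex.exp (-((θ:ℂ) * Complex.I)) + β * Complex.exp ((θ:ℂ) * Complex.I))‖ :=
          intervalIntegral.norm_integral_le_integral_norm h2π
      _ ≤ ∫ θ in (0:ℝ)..2*π, 2 * |Real.cos (θ + (β.arg - α.arg)/2)| := by
          apply intervalIntegral.integral_mono_on h2π _ _ hptbd
          · exact ((hucont.mul hecont).norm).intervalIntegrable _ _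
          · exact (continuous_const.mul
              (Real.continuous_cos.comp (continuous_id.add continuous_const)).abs).intervalIntegrable _ _
      _ = 8 := by
          rw [intervalIntegral.integral_const_mul, integral_abs_cos_shift]
          norm_num
  rw [norm_mul] at habs
  have : ‖(2 * (π:ℂ) * r)‖ = 2 * π * r := by
    rw [show (2 * (π:ℂ) * r) = ((2 * π * r : ℝ) : ℂ) by push_cast; ring, Complex.norm_real, Real.norm_eq_abs,
      _root_.abs_of_nonneg (by positivity)]
  rwa [this] at habs

/-- If `u : 𝔻 → 𝔻` is a harmonic mapping with `u(0) = 0`, then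
`|∂u(0)| + |∂̄u(0)| ≤ 4/π`, where `∂u = (1/2)(uₓ − i·u_y)` and `∂̄u = (1/2)(uₓ + i·u_y)`
are the Wirtinger derivatives of `u` viewed as a complex-valued function. -/
theorem stmt17 (u : ℂ → ℂ) (hu : HarmonicOnDisc u)
    (hmaps : MapsTo u (ball 0 1) (ball 0 1)) (h0 : u 0 = 0) :
    ‖(1 / 2) * (fderiv ℝ u 0 1 - Complex.I * fderiv ℝ u 0 Complex.I)‖
      + ‖(1 / 2) * (fderiv ℝ u 0 1 + Complex.I * fderiv ℝ u 0 Complex.I)‖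
      ≤ 4 / Real.pi := by
  have pi_pos := Real.pi_pos
  show ‖wd u 0‖ + ‖wdb u 0‖ ≤ 4 / Real.pi
  have hchoice : ∀ g : ℂ, ∃ α : ℂ, ‖α‖ = 1 ∧ α * g = (‖g‖ : ℂ) := by
    intro g
    rcases eq_or_ne g 0 with h | h
    · exact ⟨1, by simp, by simp [h]⟩
    · have habs : (‖g‖ : ℂ) ≠ 0 := by
        simpa [Complex.ofReal_ne_zero] using (norm_ne_zero_iff.2 h)
      refine ⟨(starRingEnd ℂ) g / (‖g‖ : ℂ), ?_, ?_⟩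
      · rw [norm_div, Complex.norm_conj, Complex.norm_real, Real.norm_eq_abs,
          _root_.abs_of_nonneg (norm_nonneg _), div_self (norm_ne_zero_iff.2 h)]
      · rw [div_mul_eq_mul_div, mul_comm ((starRingEnd ℂ) g) g, Complex.mul_conj,
          Complex.normSq_eq_norm_sq]
        rw [pow_two, Complex.ofReal_mul, mul_div_assoc, div_self habs, mul_one]
  obtain ⟨α, hα, hαg⟩ := hchoice (wd u 0)
  obtain ⟨β, hβ, hβk⟩ := hchoice (wdb u 0)
  have main : ∀ r : ℝ, 0 < r → r < 1 →
      ‖wd u 0‖ + ‖wdb u 0‖ ≤ 4 / (π * r) := by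
    intro r hr0 hr1
    have hb := combined_bound hu hmaps hr0 hr1 hα hβ
    rw [hαg, hβk, ← Complex.ofReal_add, Complex.norm_real, Real.norm_eq_abs,
      _root_.abs_of_nonneg (by positivity)] at hb
    rw [le_div_iff₀ (by positivity)]
    nlinarith [hb]
  have htend : Filter.Tendsto (fun r : ℝ => 4 / (π * r)) (nhdsWithin 1 (Iio 1))
      (nhds (4 / π)) := by
    have hc : ContinuousAt (fun r : ℝ => 4 / (π * r)) 1 := by
      apply ContinuousAt.div continuousAt_const (continuousAt_const.mul continuousAt_id)
      simp [pi_pos.ne']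
    have := hc.tendsto.mono_left (nhdsWithin_le_nhds (s := Iio (1:ℝ)))
    simpa using this
  refine ge_of_tendsto htend ?_
  filter_upwards [Ioo_mem_nhdsLT_of_mem (⟨zero_lt_one, le_refl (1:ℝ)⟩ : (1:ℝ) ∈ Ioc (0:ℝ) 1)]
    with r hr
  exact main r hr.1 hr.2
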